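/- With K_n = Λ_{F_2}(a_1,...,a_n) ⊗ F_2[b_1,...,b_n] and the simultaneous permutation Σ_n-action, if k is not a power of 2 and 1 ≤ k ≤ n, then for any e ≥ 0 the orbit sum [a_1⋯a_k b_1^e⋯b_k^e] is decomposable in L_n = K_n^{Σ_n}: there exists 0 < i < k with [a_1⋯a_i b_1^e⋯b_i^e] · [a_{i+1}⋯a_k b_{i+1}^e⋯b_k^e] = [a_1⋯a_k b_1^e⋯b_k^e]. -/

import Mathlib

open MvPolynomial

/-- The ideal generated by the squares of the `a`-variables (indexed by `Sum.inl`); the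
quotient is `K_n = Λ_{F₂}(a_1,…,a_n) ⊗ F₂[b_1,…,b_n]` (char 2), with the `b`-variables
indexed by `Sum.inr`. -/
noncomputable def sqIdealK (n : ℕ) : Ideal (MvPolynomial (Fin n ⊕ Fin n) (ZMod 2)) :=
  Ideal.span (Set.range fun i : Fin n =>
    (X (Sum.inl i) : MvPolynomial (Fin n ⊕ Fin n) (ZMod 2)) ^ 2)

/-- `K_n = Λ_{F₂}(a_1,…,a_n) ⊗ F₂[b_1,…,b_n]`. -/
noncomputable abbrev Kn (n : ℕ) : Type :=
  MvPolynomial (Fin n ⊕ Fin n) (ZMod 2) ⧸ sqIdealK n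

/-- The action of `g ∈ Σ_n` on `K_n`, permuting the `a`'s and `b`'s simultaneously. -/
noncomputable def permActK (n : ℕ) (g : Equiv.Perm (Fin n)) : Kn n →ₐ[ZMod 2] Kn n :=
  Ideal.Quotient.liftₐ (sqIdealK n)
    ((Ideal.Quotient.mkₐ (ZMod 2) (sqIdealK n)).comp
      (rename (Sum.map g g) : _ →ₐ[ZMod 2] _))
    (by
      intro a ha
      refine Submodule.span_induction ?_ ?_ ?_ ?_ ha
      · rintro _ ⟨i, rfl⟩
        rw [AlgHom.comp_apply, map_pow, rename_X, Ideal.Quotient.mkₐ_eq_mk,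
          Ideal.Quotient.eq_zero_iff_mem]
        exact Ideal.subset_span ⟨g i, rfl⟩
      · exact map_zero _
      · intro x y _ _ hx hy; rw [map_add, hx, hy, add_zero]
      · intro c x _ hx; rw [smul_eq_mul, map_mul, hx, mul_zero])

/-- `L_n = K_n^{Σ_n}`, the subalgebra of invariants. -/
noncomputable def Ln (n : ℕ) : Subalgebra (ZMod 2) (Kn n) where
  carrier := {x | ∀ g : Equiv.Perm (Fin n), permActK n g x = x}
  add_mem' := fun hx hy => by intro g; rw [map_add, hx g, hy g]
  mul_mem' := fun hx hy => by intro g; rw [map_mul, hx g, hy g]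
  algebraMap_mem' := fun r g => (permActK n g).commutes r

/-- The orbit sum `[m]` of a monomial (given by its exponent vector `μ`): the sum over the
`Σ_n`-orbit of `m`, each distinct monomial appearing exactly once. -/
noncomputable def orbitSum (n : ℕ) (μ : (Fin n ⊕ Fin n) →₀ ℕ) : Kn n :=
  Ideal.Quotient.mk (sqIdealK n)
    (∑ ν ∈ Finset.image
        (fun g : Equiv.Perm (Fin n) => Finsupp.equivMapDomain (Equiv.sumCongr g g) μ)
        Finset.univ,
      monomial ν (1 : ZMod 2))

/-- The augmentation `K_n → F₂` sending all variables to zero. -/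
noncomputable def augK (n : ℕ) : Kn n →ₐ[ZMod 2] ZMod 2 :=
  Ideal.Quotient.liftₐ (sqIdealK n) (aeval 0)
    (by
      intro a ha
      refine Submodule.span_induction ?_ ?_ ?_ ?_ ha
      · rintro _ ⟨i, rfl⟩
        simp
      · exact map_zero _
      · intro x y _ _ hx hy; rw [map_add, hx, hy, add_zero]
      · intro c x _ hx; rw [smul_eq_mul, map_mul, hx, mul_zero])

/-- The augmentation ideal `I ⊆ L_n`. -/
noncomputable def augIdealL (n : ℕ) : Ideal (Ln n) :=
  RingHom.ker (((augK n).comp (Ln n).val : Ln n →ₐ[ZMod 2] ZMod 2) : Ln n →+* ZMod 2)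

/-- The exponent vector of the monomial `a_{low+1}⋯a_{high} b_{low+1}^e⋯b_{high}^e`
(indices `j` with `low ≤ j < high`). -/
noncomputable def segMonomial (n low high e : ℕ) : (Fin n ⊕ Fin n) →₀ ℕ :=
  Finsupp.equivFunOnFinite.symm (Sum.elim
    (fun i : Fin n => if low ≤ (i : ℕ) ∧ (i : ℕ) < high then 1 else 0)
    (fun i : Fin n => if low ≤ (i : ℕ) ∧ (i : ℕ) < high then e else 0))


namespace Stmt14Aux

/-- exponent vector of `∏_{i∈S} a_i b_i^e` -/
noncomputable def nu (n e : ℕ) (S : Finset (Fin n)) : (Fin n ⊕ Fin n) →₀ ℕ :=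
  Finsupp.equivFunOnFinite.symm (Sum.elim
    (fun i : Fin n => if i ∈ S then 1 else 0)
    (fun i : Fin n => if i ∈ S then e else 0))

lemma nu_inl (n e : ℕ) (S : Finset (Fin n)) (i : Fin n) :
    nu n e S (Sum.inl i) = if i ∈ S then 1 else 0 := rfl

lemma nu_inr (n e : ℕ) (S : Finset (Fin n)) (i : Fin n) :
    nu n e S (Sum.inr i) = if i ∈ S then e else 0 := rfl

lemma nu_injective (n e : ℕ) : Function.Injective (nu n e) := by
  intro S T h
  ext i
  have := congrArg (fun f => f (Sum.inl i)) h
  simp only [nu_inl] at this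
  by_cases hS : i ∈ S <;> by_cases hT : i ∈ T <;> simp_all

lemma nu_add_of_disjoint (n e : ℕ) {S T : Finset (Fin n)} (h : Disjoint S T) :
    nu n e S + nu n e T = nu n e (S ∪ T) := by
  ext x
  rcases x with i | i <;>
  · simp only [Finsupp.add_apply, nu_inl, nu_inr, Finset.mem_union]
    by_cases hS : i ∈ S
    · simp_all [Finset.disjoint_left.mp h hS]
    · by_cases hT : i ∈ T <;> simp_all

lemma mono_mem_sqIdeal (n : ℕ) (μ : (Fin n ⊕ Fin n) →₀ ℕ) (j : Fin n)
    (h : 2 ≤ μ (Sum.inl j)) :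
    monomial μ (1 : ZMod 2) ∈ Ideal.span (Set.range fun i : Fin n =>
      (X (Sum.inl i) : MvPolynomial (Fin n ⊕ Fin n) (ZMod 2)) ^ 2) := by
  have hle : Finsupp.single (Sum.inl j) 2 ≤ μ := by
    rw [Finsupp.single_le_iff]; exact h
  have : monomial μ (1 : ZMod 2) =
      (X (Sum.inl j) : MvPolynomial (Fin n ⊕ Fin n) (ZMod 2)) ^ 2 *
        monomial (μ - Finsupp.single (Sum.inl j) 2) 1 := by
    rw [X_pow_eq_monomial, monomial_mul, one_mul, add_tsub_cancel_of_le hle]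
  rw [this]
  exact Ideal.mul_mem_right _ _ (Ideal.subset_span ⟨j, rfl⟩)

end Stmt14Aux

namespace Stmt14Aux

lemma exists_perm_image {n : ℕ} (S T : Finset (Fin n)) (h : S.card = T.card) :
    ∃ g : Equiv.Perm (Fin n), S.image g = T := by
  classical
  have hc : (Sᶜ : Finset (Fin n)).card = (Tᶜ : Finset (Fin n)).card := by
    simp [Finset.card_compl, h]
  let φ : (S : Finset (Fin n)) ≃ T := Finset.equivOfCardEq h
  let ψ : (Sᶜ : Finset (Fin n)) ≃ (Tᶜ : Finset (Fin n)) := Finset.equivOfCardEq hc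
  let ψ' : {x // ¬ x ∈ S} ≃ {x // ¬ x ∈ T} :=
    ((Equiv.subtypeEquivRight (fun x => (Finset.mem_compl (s := S)).symm)).trans ψ).trans
      (Equiv.subtypeEquivRight (fun x => Finset.mem_compl (s := T)))
  refine ⟨Equiv.subtypeCongr φ ψ', ?_⟩
  have hsub : S.image (Equiv.subtypeCongr φ ψ') ⊆ T := by
    intro y hy
    rw [Finset.mem_image] at hy
    obtain ⟨x, hx, rfl⟩ := hy
    have : Equiv.subtypeCongr φ ψ' x = (φ ⟨x, hx⟩ : Fin n) := by
      simp only [Equiv.subtypeCongr, Equiv.trans_apply,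
        Equiv.sumCompl_symm_apply_of_pos hx, Equiv.sumCongr_apply,
        Sum.map_inl, Equiv.sumCompl_apply_inl]
    rw [this]
    exact (φ ⟨x, hx⟩).2
  refine Finset.eq_of_subset_of_card_le hsub ?_
  rw [Finset.card_image_of_injective _ (Equiv.injective _), h]

end Stmt14Aux

namespace Stmt14Aux

lemma segMonomial_eq_nu (n low high e : ℕ) :
    segMonomial n low high e =
      nu n e (Finset.univ.filter fun i : Fin n => low ≤ (i : ℕ) ∧ (i : ℕ) < high) := by
  ext x
  rcases x with i | i <;> simp [segMonomial, nu]

lemma card_segment (n low high : ℕ) (hlh : low ≤ high) (hhn : high ≤ n) :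
    (Finset.univ.filter fun i : Fin n => low ≤ (i : ℕ) ∧ (i : ℕ) < high).card
      = high - low := by
  classical
  have himg : (Finset.univ.filter fun i : Fin n => low ≤ (i : ℕ) ∧ (i : ℕ) < high).image
      (Fin.val) = Finset.Ico low high := by
    ext x
    simp only [Finset.mem_image, Finset.mem_filter, Finset.mem_univ, true_and,
      Finset.mem_Ico]
    constructor
    · rintro ⟨i, hi, rfl⟩; exact hi
    · rintro ⟨h1, h2⟩; exact ⟨⟨x, lt_of_lt_of_le h2 hhn⟩, ⟨h1, h2⟩, rfl⟩
  have := congrArg Finset.card himg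
  rwa [Finset.card_image_of_injective _ Fin.val_injective, Nat.card_Ico] at this

lemma equivMapDomain_nu (n e : ℕ) (g : Equiv.Perm (Fin n)) (S : Finset (Fin n)) :
    Finsupp.equivMapDomain (Equiv.sumCongr g g) (nu n e S) = nu n e (S.image g) := by
  classical
  ext x
  rcases x with i | i <;>
  · simp only [Finsupp.equivMapDomain_apply, Equiv.sumCongr_symm, Equiv.sumCongr_apply,
      Sum.map_inl, Sum.map_inr, nu_inl, nu_inr]
    congr 1
    simp only [Finset.mem_image, eq_iff_iff]
    constructor
    · intro h; exact ⟨g.symm i, h, g.apply_symm_apply i⟩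
    · rintro ⟨y, hy, rfl⟩; simpa using hy

lemma orbit_image (n low high e : ℕ) (hlh : low ≤ high) (hhn : high ≤ n) :
    Finset.image (fun g : Equiv.Perm (Fin n) =>
        Finsupp.equivMapDomain (Equiv.sumCongr g g) (segMonomial n low high e))
      Finset.univ
    = (Finset.univ.powersetCard (high - low)).image (nu n e) := by
  classical
  set seg := Finset.univ.filter fun i : Fin n => low ≤ (i : ℕ) ∧ (i : ℕ) < high with hseg
  have hcard : seg.card = high - low := card_segment n low high hlh hhn
  ext μ
  simp only [Finset.mem_image, Finset.mem_univ, true_and, segMonomial_eq_nu, ← hseg,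
    Finset.mem_powersetCard]
  constructor
  · rintro ⟨g, rfl⟩
    refine ⟨seg.image g, ⟨Finset.subset_univ _, ?_⟩, (equivMapDomain_nu n e g seg).symm⟩
    rw [Finset.card_image_of_injective _ (Equiv.injective g), hcard]
  · rintro ⟨S, ⟨-, hS⟩, rfl⟩
    obtain ⟨g, hg⟩ := exists_perm_image seg S (by rw [hcard, hS])
    exact ⟨g, by rw [equivMapDomain_nu, hg]⟩

lemma orbitSum_eq (n low high e : ℕ) (hlh : low ≤ high) (hhn : high ≤ n) :
    orbitSum n (segMonomial n low high e) =
      Ideal.Quotient.mk (sqIdealK n)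
        (∑ S ∈ Finset.univ.powersetCard (high - low),
          monomial (nu n e S) (1 : ZMod 2)) := by
  rw [orbitSum, orbit_image n low high e hlh hhn,
    Finset.sum_image (fun S _ T _ h => nu_injective n e h)]

end Stmt14Aux

namespace Stmt14Aux

lemma mono_mem_sqIdealK (n : ℕ) (μ : (Fin n ⊕ Fin n) →₀ ℕ) (j : Fin n)
    (h : 2 ≤ μ (Sum.inl j)) : monomial μ (1 : ZMod 2) ∈ sqIdealK n :=
  mono_mem_sqIdeal n μ j h

lemma key_product (n e i j : ℕ) (hij : i + j ≤ n)
    (hchoose : ((i + j).choose i : ZMod 2) = 1) :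
    Ideal.Quotient.mk (sqIdealK n)
        ((∑ S ∈ Finset.univ.powersetCard i, monomial (nu n e S) (1 : ZMod 2)) *
          (∑ T ∈ Finset.univ.powersetCard j, monomial (nu n e T) (1 : ZMod 2))) =
      Ideal.Quotient.mk (sqIdealK n)
        (∑ U ∈ Finset.univ.powersetCard (i + j), monomial (nu n e U) (1 : ZMod 2)) := by
  classical
  rw [Finset.sum_mul_sum]
  simp only [monomial_mul, one_mul]
  rw [← Finset.sum_product']
  rw [← Finset.sum_filter_add_sum_filter_not
    ((Finset.univ.powersetCard i) ×ˢ (Finset.univ.powersetCard j))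
    (fun p => Disjoint p.1 p.2), map_add]
  have hbad : Ideal.Quotient.mk (sqIdealK n)
      (∑ p ∈ ((Finset.univ.powersetCard i) ×ˢ (Finset.univ.powersetCard j)).filter
        (fun p => ¬ Disjoint p.1 p.2),
        monomial (nu n e p.1 + nu n e p.2) (1 : ZMod 2)) = 0 := by
    rw [Ideal.Quotient.eq_zero_iff_mem]
    apply Ideal.sum_mem
    intro p hp
    rw [Finset.mem_filter] at hp
    obtain ⟨a, haS, haT⟩ := Finset.not_disjoint_iff.mp hp.2
    apply mono_mem_sqIdealK n _ a
    simp [Finsupp.add_apply, nu_inl, haS, haT]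
  rw [hbad, add_zero]
  have hkey : (∑ p ∈ ((Finset.univ.powersetCard i) ×ˢ (Finset.univ.powersetCard j)).filter
        (fun p => Disjoint p.1 p.2),
        monomial (nu n e p.1 + nu n e p.2) (1 : ZMod 2)) =
      ∑ q ∈ (Finset.univ.powersetCard (i + j)).sigma (fun U => U.powersetCard i),
        monomial (nu n e q.1) (1 : ZMod 2) := by
    refine Finset.sum_nbij' (fun p => ⟨p.1 ∪ p.2, p.1⟩) (fun q => (q.2, q.1 \ q.2))
      ?_ ?_ ?_ ?_ ?_
    · rintro ⟨S, T⟩ hp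
      rw [Finset.mem_filter, Finset.mem_product, Finset.mem_powersetCard,
        Finset.mem_powersetCard] at hp
      obtain ⟨⟨⟨-, hS⟩, -, hT⟩, hd⟩ := hp
      rw [Finset.mem_sigma, Finset.mem_powersetCard, Finset.mem_powersetCard]
      exact ⟨⟨Finset.subset_univ _, by rw [Finset.card_union_of_disjoint hd, hS, hT]⟩,
        Finset.subset_union_left, hS⟩
    · rintro ⟨U, S⟩ hq
      rw [Finset.mem_sigma, Finset.mem_powersetCard, Finset.mem_powersetCard] at hq
      obtain ⟨⟨-, hU⟩, hSU, hS⟩ := hq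
      rw [Finset.mem_filter, Finset.mem_product, Finset.mem_powersetCard,
        Finset.mem_powersetCard]
      refine ⟨⟨⟨Finset.subset_univ _, hS⟩, Finset.subset_univ _, ?_⟩,
        Finset.disjoint_sdiff⟩
      rw [Finset.card_sdiff_of_subset hSU, hU, hS, Nat.add_sub_cancel_left]
    · rintro ⟨S, T⟩ hp
      rw [Finset.mem_filter] at hp
      simp only [Finset.union_sdiff_cancel_left hp.2]
    · rintro ⟨U, S⟩ hq
      rw [Finset.mem_sigma, Finset.mem_powersetCard, Finset.mem_powersetCard] at hq
      simp only [Finset.union_sdiff_of_subset hq.2.1]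
    · rintro ⟨S, T⟩ hp
      rw [Finset.mem_filter] at hp
      rw [nu_add_of_disjoint n e hp.2]
  rw [hkey, Finset.sum_sigma]
  congr 1
  apply Finset.sum_congr rfl
  intro U hU
  rw [Finset.mem_powersetCard] at hU
  simp only [Finset.sum_const, Finset.card_powersetCard, hU.2]
  rw [← map_nsmul (monomial (nu n e U)), nsmul_eq_mul, mul_one, hchoose]

end Stmt14Aux

namespace Stmt14Aux

lemma exists_odd_choose (k : ℕ) (hk1 : 1 ≤ k) (hpow : ¬ ∃ m : ℕ, k = 2 ^ m) :
    ∃ i : ℕ, 0 < i ∧ i < k ∧ Nat.choose k i % 2 = 1 := by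
  have hk0 : k ≠ 0 := by omega
  set m := k.factorization 2 with hm
  set q := k / 2 ^ m with hq
  have hkey : 2 ^ m * q = k := Nat.ordProj_mul_ordCompl_eq_self k 2
  have hqodd : ¬ 2 ∣ q := Nat.not_dvd_ordCompl Nat.prime_two hk0
  have hq1 : q ≠ 1 := fun h => hpow ⟨m, by rw [← hkey, h, mul_one]⟩
  have hq0 : q ≠ 0 := fun h => hk0 (by rw [← hkey, h, mul_zero])
  have hq2 : 2 ≤ q := (Nat.two_le_iff q).mpr ⟨hq0, hq1⟩
  have hmp : 0 < 2 ^ m := Nat.pow_pos (by norm_num)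
  have hilt : 2 ^ m < k := by nlinarith
  refine ⟨2 ^ m, hmp, hilt, ?_⟩
  have hlucas := Choose.choose_modEq_prod_range_choose_nat (p := 2) (n := k) (k := 2 ^ m)
    (a := k) (Nat.lt_two_pow_self (n := k)) (lt_of_lt_of_le hilt (le_of_lt (Nat.lt_two_pow_self (n := k))))
  have hprod : (∏ j ∈ Finset.range k, Nat.choose (k / 2 ^ j % 2) (2 ^ m / 2 ^ j % 2)) = 1 := by
    apply Finset.prod_eq_one
    intro j _
    rcases lt_trichotomy j m with hj | rfl | hj
    · have : 2 ^ m / 2 ^ j = 2 ^ (m - j) := Nat.pow_div (le_of_lt hj) (by norm_num)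
      have h2 : 2 ^ (m - j) % 2 = 0 := by
        have : 2 ∣ 2 ^ (m - j) := dvd_pow_self 2 (by omega)
        omega
      rw [this, h2, Nat.choose_zero_right]
    · have h1 : (2 : ℕ) ^ m / 2 ^ m = 1 := Nat.div_self hmp
      have h2 : k / 2 ^ m % 2 = 1 := by
        have := Nat.mod_two_eq_zero_or_one q
        rcases this with h | h
        · exact absurd (Nat.dvd_of_mod_eq_zero h) hqodd
        · exact h
      rw [h1, h2]
      norm_num
    · have : 2 ^ m / 2 ^ j = 0 :=
        Nat.div_eq_of_lt (Nat.pow_lt_pow_right (by norm_num) hj)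
      rw [this, Nat.zero_mod, Nat.choose_zero_right]
  unfold Nat.ModEq at hlucas
  rw [hprod] at hlucas
  simpa using hlucas

end Stmt14Aux

/-- if `1 ≤ k ≤ n` and `k` is not a power of `2`, then for any `e ≥ 0` the
orbit sum `[a_1⋯a_k b_1^e⋯b_k^e]` is decomposable in `L_n`: there is `0 < i < k` with
`[a_1⋯a_i b_1^e⋯b_i^e] · [a_{i+1}⋯a_k b_{i+1}^e⋯b_k^e] = [a_1⋯a_k b_1^e⋯b_k^e]`. -/
theorem stmt14 (n k e : ℕ) (hk1 : 1 ≤ k) (hkn : k ≤ n) (hpow : ¬ ∃ m : ℕ, k = 2 ^ m) :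
    ∃ i : ℕ, 0 < i ∧ i < k ∧
      orbitSum n (segMonomial n 0 i e) * orbitSum n (segMonomial n i k e) =
        orbitSum n (segMonomial n 0 k e) := by
  obtain ⟨i, hi0, hik, hodd⟩ := Stmt14Aux.exists_odd_choose k hk1 hpow
  refine ⟨i, hi0, hik, ?_⟩
  have hile : i ≤ k := le_of_lt hik
  rw [Stmt14Aux.orbitSum_eq n 0 i e (Nat.zero_le i) (le_trans hile hkn),
    Stmt14Aux.orbitSum_eq n i k e hile hkn,
    Stmt14Aux.orbitSum_eq n 0 k e (Nat.zero_le k) hkn, Nat.sub_zero, Nat.sub_zero, ← map_mul]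
  have hij : i + (k - i) = k := Nat.add_sub_cancel' hile
  have hcast : (((i + (k - i)).choose i : ℕ) : ZMod 2) = 1 := by
    rw [hij, ← ZMod.natCast_mod, hodd, Nat.cast_one]
  have hkp := Stmt14Aux.key_product n e i (k - i) (by omega) hcast
  rw [hij] at hkp
  exact hkp
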